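/- Let n be a positive natural number, let α > 0 and λ ∈ ℝ, and set λ' = λ/α. Let (f_t)_{t∈ℕ} be a sequence of differentiable batch loss functions f_t : EuclideanSpace ℝ (Fin n) → ℝ, and define f_t^reg(θ) = f_t(θ) + (λ'/2)·‖θ‖². Let (x_t) and (y_t) be sequences in EuclideanSpace ℝ (Fin n) with x_0 = y_0, satisfying the recurrences x_{t+1} = x_t − α·∇f_t^reg(x_t) (standard SGD on the L₂-regularized losses) and y_{t+1} = (1 − λ)·y_t − α·∇f_t(y_t) (SGD with decoupled weight decay λ on the unregularized losses). Then x_t = y_t for all t ∈ ℕ. -/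

import Mathlib

open InnerProductSpace

lemma grad_add_half_norm_sq {n : ℕ} (c : ℝ) (f : EuclideanSpace ℝ (Fin n) → ℝ)
    (hf : Differentiable ℝ f) (x : EuclideanSpace ℝ (Fin n)) :
    HasGradientAt (fun θ => f θ + (c / 2) * ‖θ‖ ^ 2) (gradient f x + c • x) x := by
  have h1 : HasFDerivAt f (toDual ℝ _ (gradient f x)) x :=
    ((hf x).hasGradientAt).hasFDerivAt
  have h2 : HasFDerivAt (fun θ : EuclideanSpace ℝ (Fin n) => ‖θ‖ ^ 2)
      (2 • (innerSL ℝ x)) x := by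
    simpa using (hasStrictFDerivAt_norm_sq x).hasFDerivAt
  have h3 : HasFDerivAt (fun θ => f θ + (c / 2) * ‖θ‖ ^ 2)
      (toDual ℝ _ (gradient f x) + (c / 2) • (2 • (innerSL ℝ x))) x :=
    h1.add (h2.const_smul (c / 2))
  rw [hasGradientAt_iff_hasFDerivAt]
  refine h3.congr_fderiv ?_
  ext v
  simp [toDual_apply_apply, inner_add_left, inner_smul_left, real_inner_comm x v]
  ring

/-- Proposition 1 (iterates): SGD with learning rate `α` on the L₂-regularized batch losses
`f_t^reg θ = f_t θ + (λ'/2)‖θ‖²` with `λ' = λ/α` produces the same iterates as SGD with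
decoupled weight decay `λ` on the unregularized batch losses `f_t`. -/
theorem sgd_l2_iterates_eq_weight_decay_iterates
    (n : ℕ) (hn : 0 < n) (α lam : ℝ) (hα : 0 < α)
    (f : ℕ → EuclideanSpace ℝ (Fin n) → ℝ) (hf : ∀ t, Differentiable ℝ (f t))
    (freg : ℕ → EuclideanSpace ℝ (Fin n) → ℝ)
    (hfreg : ∀ t θ, freg t θ = f t θ + ((lam / α) / 2) * ‖θ‖ ^ 2)
    (x y : ℕ → EuclideanSpace ℝ (Fin n))
    (h0 : x 0 = y 0)
    (hx : ∀ t, x (t + 1) = x t - α • gradient (freg t) (x t))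
    (hy : ∀ t, y (t + 1) = (1 - lam) • y t - α • gradient (f t) (y t)) :
    ∀ t, x t = y t := by
  intro t
  induction t with
  | zero => exact h0
  | succ t ih =>
    have hgrad : gradient (freg t) (x t)
        = gradient (f t) (x t) + (lam / α) • x t := by
      have := grad_add_half_norm_sq (lam / α) (f t) (hf t) (x t)
      have hfun : freg t = fun θ => f t θ + ((lam / α) / 2) * ‖θ‖ ^ 2 :=
        funext (hfreg t)
      rw [hfun]
      exact this.gradient
    rw [hx t, hy t, hgrad, ih]
    rw [smul_add, smul_smul, mul_div_cancel₀ _ (ne_of_gt hα)]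
    module
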